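/- Let f, g : [0, ∞) → [0, ∞) be continuous synchronous functions and A, B be positive semidefinite n×n complex matrices. Then for every j with 1 ≤ j ≤ n, f(s_j(A))·g(s_j(A)) + s_j(f(B)g(B)) ≥ f(s_j(A))·s_n(g(B)) + s_j(f(B))·g(s_j(A)). -/

import Mathlib

open scoped ComplexOrder

/-- `sVal A j` is the `j`-th largest singular value (1-indexed) of the matrix `A`, i.e. the
`j`-th largest eigenvalue of `|A| = (AᴴA)^{1/2}`. -/
noncomputable def sVal {n : ℕ} (A : Matrix (Fin n) (Fin n) ℂ) (j : ℕ) : ℝ :=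
  ((Finset.univ.val.map fun i =>
      Real.sqrt ((Matrix.isHermitian_conjTranspose_mul_self A).eigenvalues i)).sort
    (· ≥ ·)).getD (j - 1) 0

section aux

open Polynomial Matrix

-- list lemmas
private lemma sortL_getD_mem {m : Multiset ℝ} {i : ℕ} (h : i < Multiset.card m) :
    (m.sort (· ≥ ·)).getD i 0 ∈ m := by
  have h' : i < (m.sort (· ≥ ·)).length := by rwa [Multiset.length_sort]
  rw [List.getD_eq_getElem _ _ h']
  exact Multiset.mem_sort (· ≥ ·) |>.mp (List.getElem_mem h')

private lemma sortL_getD_nonneg {m : Multiset ℝ} (hm : ∀ x ∈ m, 0 ≤ x) (i : ℕ) :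
    0 ≤ (m.sort (· ≥ ·)).getD i 0 := by
  by_cases h : i < Multiset.card m
  · exact hm _ (sortL_getD_mem h)
  · rw [List.getD_eq_default _ _ (by rw [Multiset.length_sort]; omega)]

private lemma sortL_getD_min {m : Multiset ℝ} {x : ℝ} (hx : x ∈ m) :
    (m.sort (· ≥ ·)).getD (Multiset.card m - 1) 0 ≤ x := by
  set L := m.sort (· ≥ ·) with hL
  have hlen : L.length = Multiset.card m := Multiset.length_sort _
  have hx' : x ∈ L := (Multiset.mem_sort _).mpr hx
  obtain ⟨i, hi⟩ := List.mem_iff_get.mp hx'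
  have hcard : 1 ≤ Multiset.card m := by
    have := i.2; omega
  have h' : Multiset.card m - 1 < L.length := by omega
  rw [List.getD_eq_getElem _ _ h']
  have hs : L.Pairwise (· ≥ ·) := Multiset.pairwise_sort _ _
  have h2 := hs.rel_get_of_le (a := i) (b := ⟨Multiset.card m - 1, h'⟩) (by
    simp only [Fin.le_def]; omega)
  rw [← hi]
  simpa [List.get_eq_getElem] using h2

private lemma sortL_countP_ge {m : Multiset ℝ} {j : ℕ} (hj1 : 1 ≤ j)
    (hjn : j ≤ Multiset.card m) :
    j ≤ m.countP (fun x => (m.sort (· ≥ ·)).getD (j - 1) 0 ≤ x) := by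
  set L := m.sort (· ≥ ·) with hLdef
  have hlen : L.length = Multiset.card m := Multiset.length_sort _
  set v := L.getD (j - 1) 0 with hv
  have hTle : ((L.take j : List ℝ) : Multiset ℝ) ≤ m := by
    calc ((L.take j : List ℝ) : Multiset ℝ) ≤ (L : Multiset ℝ) :=
          Multiset.coe_le.mpr (L.take_sublist j).subperm
      _ = m := Multiset.sort_eq _ _
  have hall : ∀ x ∈ ((L.take j : List ℝ) : Multiset ℝ), v ≤ x := by
    intro x hx
    rw [Multiset.mem_coe, List.mem_take_iff_getElem] at hx
    obtain ⟨i, hi, rfl⟩ := hx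
    have hi' : i < L.length := by omega
    have hj' : j - 1 < L.length := by omega
    rw [hv, List.getD_eq_getElem _ _ hj']
    have hs : L.Pairwise (· ≥ ·) := Multiset.pairwise_sort _ _
    exact hs.rel_get_of_le (a := ⟨i, hi'⟩) (b := ⟨j - 1, hj'⟩) (by simp only [Fin.le_def]; omega)
  calc j = Multiset.card ((L.take j : List ℝ) : Multiset ℝ) := by
        simp only [Multiset.coe_card, List.length_take]; omega
    _ = Multiset.countP (fun x => v ≤ x) ((L.take j : List ℝ) : Multiset ℝ) :=
        (Multiset.countP_eq_card.mpr hall).symm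
    _ ≤ m.countP (fun x => v ≤ x) := Multiset.countP_le_of_le _ hTle

private lemma sortL_getD_ge_of_countP {m : Multiset ℝ} {j : ℕ} {c : ℝ} (hj1 : 1 ≤ j)
    (hjn : j ≤ Multiset.card m) (hcount : j ≤ m.countP (fun x => c ≤ x)) :
    c ≤ (m.sort (· ≥ ·)).getD (j - 1) 0 := by
  by_contra hlt
  push_neg at hlt
  set L := m.sort (· ≥ ·) with hLdef
  have hlen : L.length = Multiset.card m := Multiset.length_sort _
  have hm : m = ((L.take (j-1) : List ℝ) : Multiset ℝ) + ((L.drop (j-1) : List ℝ) : Multiset ℝ) := by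
    have h0 : m = ((L.take (j-1) ++ L.drop (j-1) : List ℝ) : Multiset ℝ) := by
      rw [List.take_append_drop]; exact (Multiset.sort_eq _ _).symm
    rw [h0, ← Multiset.coe_add]
  have h1 : Multiset.countP (fun x => c ≤ x) ((L.take (j-1) : List ℝ) : Multiset ℝ) ≤ j - 1 := by
    calc Multiset.countP (fun x => c ≤ x) _ ≤ Multiset.card ((L.take (j-1) : List ℝ) : Multiset ℝ) :=
          Multiset.countP_le_card _ _
      _ ≤ j - 1 := by simp only [Multiset.coe_card, List.length_take]; omega
  have h2 : Multiset.countP (fun x => c ≤ x) ((L.drop (j-1) : List ℝ) : Multiset ℝ) = 0 := by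
    rw [Multiset.countP_eq_zero]
    intro x hx
    rw [Multiset.mem_coe] at hx
    obtain ⟨i, hi⟩ := List.mem_iff_getElem.mp hx
    obtain ⟨hilt, rfl⟩ := hi
    rw [List.getElem_drop]
    have hj' : j - 1 < L.length := by omega
    have hi' : j - 1 + i < L.length := by
      have := hilt; rw [List.length_drop] at this; omega
    have hs : L.Pairwise (· ≥ ·) := Multiset.pairwise_sort _ _
    have hle : L[j - 1 + i] ≤ L[j-1] := by
      have := hs.rel_get_of_le (a := ⟨j - 1, hj'⟩) (b := ⟨j - 1 + i, hi'⟩)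
        (by simp only [Fin.le_def]; omega)
      simpa [List.get_eq_getElem] using this
    rw [List.getD_eq_getElem _ _ hj'] at hlt
    push_neg
    exact lt_of_le_of_lt hle hlt
  rw [hm, Multiset.countP_add, h2] at hcount
  omega


private lemma charpoly_unitary_conj {m : Type*} [Fintype m] [DecidableEq m]
    (U D : Matrix m m ℂ) (hU : U ∈ unitary (Matrix m m ℂ)) :
    (U * D * star U).charpoly = D.charpoly := by
  have hUsU : U * star U = 1 := Unitary.mul_star_self_of_mem hU
  have key : charmatrix (U * D * star U)
      = (U.map C) * charmatrix D * ((star U).map C) := by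
    rw [charmatrix, charmatrix, mul_sub, sub_mul]
    congr 1
    · have hc : Commute (Matrix.scalar m (X : ℂ[X])) ((star U).map C) :=
        Matrix.scalar_commute _ (fun r => Commute.all _ _) _
      symm
      calc U.map C * Matrix.scalar m (X : ℂ[X]) * (star U).map C
          = U.map C * ((star U).map C * Matrix.scalar m (X : ℂ[X])) := by rw [mul_assoc, hc.eq]
        _ = (U * star U).map C * Matrix.scalar m (X : ℂ[X]) := by
            rw [← mul_assoc, ← Matrix.map_mul]
        _ = Matrix.scalar m (X : ℂ[X]) := by
            rw [hUsU, Matrix.map_one _ (map_zero C) (map_one C), one_mul]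
    · simp only [RingHom.mapMatrix_apply, Matrix.map_mul]
  rw [Matrix.charpoly, key, det_mul, det_mul, charpoly]
  have : (U.map C).det * ((star U).map C).det = 1 := by
    rw [show U.map (C : ℂ →+* ℂ[X]) = (C : ℂ →+* ℂ[X]).mapMatrix U from rfl,
      show (star U).map (C : ℂ →+* ℂ[X]) = (C : ℂ →+* ℂ[X]).mapMatrix (star U) from rfl,
      ← RingHom.map_det, ← RingHom.map_det, ← _root_.map_mul, ← det_mul, hUsU, det_one, _root_.map_one]
  ring_nf
  calc (U.map C).det * (charmatrix D).det * ((star U).map C).det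
      = (charmatrix D).det * ((U.map C).det * ((star U).map C).det) := by ring
    _ = (charmatrix D).det := by rw [this, mul_one]

private lemma charpoly_diagonal_c {m : Type*} [Fintype m] [DecidableEq m] (d : m → ℂ) :
    (Matrix.diagonal d).charpoly = (Finset.univ.val.map fun i => X - C (d i)).prod := by
  have h : charmatrix (Matrix.diagonal d) = Matrix.diagonal fun i => X - C (d i) := by
    ext i k
    by_cases h : i = k
    · subst h; simp [charmatrix_apply_eq]
    · simp [charmatrix_apply_ne _ _ _ h, Matrix.diagonal_apply_ne _ h]
  rw [Matrix.charpoly, h, det_diagonal, Finset.prod_eq_multiset_prod]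

private lemma roots_charpoly_of_conj_diag {m : Type*} [Fintype m] [DecidableEq m]
    {M : Matrix m m ℂ} (U : Matrix m m ℂ) (hU : U ∈ unitary (Matrix m m ℂ)) (d : m → ℝ)
    (hMU : M = U * Matrix.diagonal (fun i => (d i : ℂ)) * star U) :
    M.charpoly.roots = Finset.univ.val.map fun i => (d i : ℂ) := by
  rw [hMU, charpoly_unitary_conj _ _ hU, charpoly_diagonal_c]
  have : (Finset.univ.val.map fun i => X - C ((d i : ℂ)))
      = (Finset.univ.val.map fun i => ((d i : ℂ))).map fun a => X - C a := by
    rw [Multiset.map_map]; rfl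
  rw [this, roots_multiset_prod_X_sub_C]

private lemma eigs_multiset_of_conj_diag {m : Type*} [Fintype m] [DecidableEq m]
    {M : Matrix m m ℂ} (hM : M.IsHermitian) (U : Matrix m m ℂ)
    (hU : U ∈ unitary (Matrix m m ℂ)) (d : m → ℝ)
    (hMU : M = U * Matrix.diagonal (fun i => (d i : ℂ)) * star U) :
    Finset.univ.val.map hM.eigenvalues = Finset.univ.val.map d := by
  have h1 : M.charpoly.roots = Finset.univ.val.map fun i => ((hM.eigenvalues i : ℝ) : ℂ) := by
    apply roots_charpoly_of_conj_diag (hM.eigenvectorUnitary : Matrix m m ℂ)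
      (SetLike.coe_mem _) hM.eigenvalues
    conv_lhs => rw [hM.spectral_theorem]
    rfl
  have h2 := roots_charpoly_of_conj_diag U hU d hMU
  have h3 : (Finset.univ.val.map hM.eigenvalues).map (fun x : ℝ => (x : ℂ))
      = (Finset.univ.val.map d).map (fun x : ℝ => (x : ℂ)) := by
    have h4 := h1.symm.trans h2
    simpa [Multiset.map_map, Function.comp_def] using h4
  exact Multiset.map_injective Complex.ofReal_injective h3


variable {n : ℕ} {B : Matrix (Fin n) (Fin n) ℂ}

private lemma hcfc_form (hB : B.IsHermitian) (p : ℝ → ℝ) :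
    hB.cfc p = (hB.eigenvectorUnitary : Matrix (Fin n) (Fin n) ℂ) *
      Matrix.diagonal (fun i => ((p (hB.eigenvalues i) : ℝ) : ℂ)) *
      star (hB.eigenvectorUnitary : Matrix (Fin n) (Fin n) ℂ) := rfl

private lemma hcfc_mul (hB : B.IsHermitian) (p q : ℝ → ℝ) :
    hB.cfc p * hB.cfc q = hB.cfc (fun x => p x * q x) := by
  rw [hcfc_form, hcfc_form, hcfc_form]
  have h1 : star (hB.eigenvectorUnitary : Matrix (Fin n) (Fin n) ℂ) *
      (hB.eigenvectorUnitary : Matrix (Fin n) (Fin n) ℂ) = 1 :=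
    Unitary.star_mul_self_of_mem (SetLike.coe_mem _)
  calc _ = (hB.eigenvectorUnitary : Matrix (Fin n) (Fin n) ℂ) *
        (Matrix.diagonal (fun i => ((p (hB.eigenvalues i) : ℝ) : ℂ)) *
          (star (hB.eigenvectorUnitary : Matrix (Fin n) (Fin n) ℂ) *
            (hB.eigenvectorUnitary : Matrix (Fin n) (Fin n) ℂ)) *
          Matrix.diagonal (fun i => ((q (hB.eigenvalues i) : ℝ) : ℂ))) *
        star (hB.eigenvectorUnitary : Matrix (Fin n) (Fin n) ℂ) := by
        simp only [mul_assoc]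
    _ = _ := by
        rw [h1, mul_one, diagonal_mul_diagonal]
        congr 2
        ext i
        push_cast
        ring

private lemma hcfc_conjTranspose (hB : B.IsHermitian) (p : ℝ → ℝ) :
    (hB.cfc p)ᴴ = hB.cfc p := by
  rw [hcfc_form, ← star_eq_conjTranspose]
  simp only [StarMul.star_mul, star_star]
  rw [mul_assoc]
  congr 1
  rw [star_eq_conjTranspose, diagonal_conjTranspose]
  congr 1
  ext i
  simp [Pi.star_def]

private lemma eigs_hcfc (hB : B.IsHermitian) (p : ℝ → ℝ) :
    Finset.univ.val.map (Matrix.isHermitian_conjTranspose_mul_self (hB.cfc p)).eigenvalues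
      = Finset.univ.val.map (fun i => p (hB.eigenvalues i) * p (hB.eigenvalues i)) := by
  apply eigs_multiset_of_conj_diag _ (hB.eigenvectorUnitary : Matrix (Fin n) (Fin n) ℂ)
    (SetLike.coe_mem _)
  rw [hcfc_conjTranspose, hcfc_mul, hcfc_form]

private lemma sVal_hcfc (hB : B.IsHermitian) (p : ℝ → ℝ)
    (hp : ∀ i, 0 ≤ p (hB.eigenvalues i)) (k : ℕ) :
    sVal (hB.cfc p) k =
      ((Finset.univ.val.map fun i => p (hB.eigenvalues i)).sort (· ≥ ·)).getD (k - 1) 0 := by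
  rw [sVal]
  congr 2
  have h1 : (Finset.univ.val.map fun i =>
      Real.sqrt ((Matrix.isHermitian_conjTranspose_mul_self (hB.cfc p)).eigenvalues i))
      = (Finset.univ.val.map (Matrix.isHermitian_conjTranspose_mul_self (hB.cfc p)).eigenvalues).map
          Real.sqrt := by
    rw [Multiset.map_map]; rfl
  rw [h1, eigs_hcfc hB p, Multiset.map_map]
  apply Multiset.map_congr rfl
  intro i _
  simp only [Function.comp_apply]
  exact Real.sqrt_mul_self (hp i)
end aux

/-- Chebyshev type inequality for singular values: for synchronous `f, g : [0,∞)` → `[0,∞)`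
and positive semidefinite matrices `A, B`,
`f(s_j(A))g(s_j(A)) + s_j(f(B)g(B)) ≥ f(s_j(A))s_n(g(B)) + s_j(f(B))g(s_j(A))`. -/
theorem chebyshev_singularValues' {n : ℕ} (f g : ℝ → ℝ)
    (hfc : ContinuousOn f (Set.Ici 0)) (hgc : ContinuousOn g (Set.Ici 0))
    (hf0 : ∀ x : ℝ, 0 ≤ x → 0 ≤ f x) (hg0 : ∀ x : ℝ, 0 ≤ x → 0 ≤ g x)
    (hsync : ∀ s ∈ Set.Ici (0 : ℝ), ∀ t ∈ Set.Ici (0 : ℝ), 0 ≤ (f t - f s) * (g t - g s))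
    (A B : Matrix (Fin n) (Fin n) ℂ) (hA : A.PosSemidef) (hB : B.PosSemidef)
    (j : ℕ) (hj1 : 1 ≤ j) (hjn : j ≤ n) :
    f (sVal A j) * g (sVal A j) + sVal (cfc f B * cfc g B) j ≥
      f (sVal A j) * sVal (cfc g B) n + sVal (cfc f B) j * g (sVal A j) := by
  classical
  have hBh : B.IsHermitian := hB.1
  set lam := hBh.eigenvalues with hlam
  have hlam0 : ∀ i, 0 ≤ lam i := hB.eigenvalues_nonneg
  set s : Multiset ℝ := Finset.univ.val.map lam with hs
  have hcard : Multiset.card s = n := by simp [hs]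
  set a := sVal A j with ha
  have ha0 : 0 ≤ a := by
    rw [ha, sVal]
    apply sortL_getD_nonneg
    intro x hx
    obtain ⟨i, _, rfl⟩ := Multiset.mem_map.mp hx
    exact Real.sqrt_nonneg _
  have hfa0 : 0 ≤ f a := hf0 a ha0
  have hga0 : 0 ≤ g a := hg0 a ha0
  have hmapf : (Finset.univ.val.map fun i => f (lam i)) = s.map f := by
    rw [hs, Multiset.map_map]; rfl
  have hmapg : (Finset.univ.val.map fun i => g (lam i)) = s.map g := by
    rw [hs, Multiset.map_map]; rfl
  have hmapfg : (Finset.univ.val.map fun i => f (lam i) * g (lam i))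
      = s.map (fun x => f x * g x) := by
    rw [hs, Multiset.map_map]; rfl
  have hf_eq : sVal (cfc f B) j = ((s.map f).sort (· ≥ ·)).getD (j - 1) 0 := by
    rw [hBh.cfc_eq f, sVal_hcfc hBh f (fun i => hf0 _ (hlam0 i)) j, hmapf]
  have hg_eq : sVal (cfc g B) n = ((s.map g).sort (· ≥ ·)).getD (n - 1) 0 := by
    rw [hBh.cfc_eq g, sVal_hcfc hBh g (fun i => hg0 _ (hlam0 i)) n, hmapg]
  have hfg_eq : sVal (cfc f B * cfc g B) j
      = ((s.map (fun x => f x * g x)).sort (· ≥ ·)).getD (j - 1) 0 := by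
    rw [hBh.cfc_eq f, hBh.cfc_eq g, hcfc_mul,
      sVal_hcfc hBh (fun x => f x * g x) (fun i => mul_nonneg (hf0 _ (hlam0 i)) (hg0 _ (hlam0 i))) j, hmapfg]
  set v := ((s.map f).sort (· ≥ ·)).getD (j - 1) 0 with hv
  set mg := ((s.map g).sort (· ≥ ·)).getD (n - 1) 0 with hmg
  rw [hf_eq, hg_eq, hfg_eq, ge_iff_le]
  have key : f a * mg + v * g a - f a * g a
      ≤ ((s.map (fun x => f x * g x)).sort (· ≥ ·)).getD (j - 1) 0 := by
    apply sortL_getD_ge_of_countP hj1 (by rw [Multiset.card_map, hcard]; exact hjn)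
    have c1 : j ≤ (s.map f).countP (fun x => v ≤ x) :=
      sortL_countP_ge hj1 (by rw [Multiset.card_map, hcard]; exact hjn)
    rw [Multiset.countP_map] at c1 ⊢
    refine le_trans c1 (Multiset.card_le_card ?_)
    have e1 : s.filter (fun b => v ≤ f b) = s.filter (fun b => b ∈ s ∧ v ≤ f b) :=
      (Multiset.filter_congr (fun x hx => by simp [hx])).symm
    have e2 : s.filter (fun b => f a * mg + v * g a - f a * g a ≤ f b * g b)
        = s.filter (fun b => b ∈ s ∧ f a * mg + v * g a - f a * g a ≤ f b * g b) :=
      (Multiset.filter_congr (fun x hx => by simp [hx])).symm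
    rw [e1, e2]
    apply Multiset.monotone_filter_right
    intro b hb
    obtain ⟨hbs, hvb⟩ := hb
    refine ⟨hbs, ?_⟩
    have hb0 : 0 ≤ b := by
      obtain ⟨i, _, rfl⟩ := Multiset.mem_map.mp hbs
      exact hlam0 i
    have hmgb : mg ≤ g b := by
      have hgb : g b ∈ s.map g := Multiset.mem_map_of_mem g hbs
      have := sortL_getD_min hgb
      rwa [Multiset.card_map, hcard, ← hmg] at this
    have hsab := hsync a (Set.mem_Ici.mpr ha0) b (Set.mem_Ici.mpr hb0)
    nlinarith [mul_le_mul_of_nonneg_left hmgb hfa0, mul_le_mul_of_nonneg_right hvb hga0]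
  linarith [key]
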